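/- Let n ≥ 1000 be an integer and let p be a real number with (10 ln n)/n ≤ p ≤ 1. In the Erdős–Rényi random graph G(n,p), the probability that the graph is connected is at least 1 − e^{−np/3}. -/

import Mathlib

open MeasureTheory

/-- The simple graph on `Fin n` determined by an indicator `ω` of the (unordered) pairs:
`u` and `v` are adjacent iff `u ≠ v` and the pair `{u, v}` is switched on by `ω`. -/
def erdosRenyiGraph (n : ℕ) (ω : Sym2 (Fin n) → Bool) : SimpleGraph (Fin n) where
  Adj u v := u ≠ v ∧ ω s(u, v) = true
  symm := by
    constructor
    intro u v h
    exact ⟨h.1.symm, by rw [Sym2.eq_swap]; exact h.2⟩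
  loopless := by constructor; intro u h; exact h.1 rfl

/-- The Erdős–Rényi measure: each unordered pair is included independently with
probability `p` (a product of Bernoulli measures). -/
noncomputable def erdosRenyiMeasure (n : ℕ) (p : ℝ) (hp : p ≤ 1) :
    Measure (Sym2 (Fin n) → Bool) :=
  Measure.pi fun _ : Sym2 (Fin n) =>
    (PMF.bernoulli (Real.toNNReal p) (by simpa using hp)).toMeasure


open scoped ENNReal

lemma er_basic (n : ℕ) (hn : 1000 ≤ n) {p : ℝ}
    (hp1 : 10 * Real.log n / n ≤ p) :
    0 ≤ Real.log n ∧ 0 ≤ p ∧ 10 * Real.log n ≤ p * n ∧ p ≤ p * n / 1000 := by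
  have hn0 : (0 : ℝ) < n := by exact_mod_cast Nat.pos_of_ne_zero (by omega)
  have hn1000 : (1000 : ℝ) ≤ n := by exact_mod_cast hn
  have hlog : 0 ≤ Real.log n := Real.log_nonneg (by linarith)
  have hp0 : 0 ≤ p := le_trans (by positivity) hp1
  have h3 : 10 * Real.log n ≤ p * n := by
    have := (div_le_iff₀ hn0).mp hp1
    linarith
  refine ⟨hlog, hp0, h3, ?_⟩
  nlinarith [mul_nonneg hp0 (by linarith : (0:ℝ) ≤ (n:ℝ) - 1000)]

/-- Key per-cardinality real estimate. -/
lemma er_key (n : ℕ) (hn : 1000 ≤ n) {p : ℝ}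
    (hp1 : 10 * Real.log n / n ≤ p) (hp2 : p ≤ 1) {k : ℕ}
    (hk1 : 1 ≤ k) (hk2 : k < n) :
    (n.choose k : ℝ) * (1 - p) ^ (k * (n - k)) ≤
      (n : ℝ) * Real.exp (-(p * ((n : ℝ) - 1))) := by
  obtain ⟨hlog, hp0, hpn, hp1000⟩ := er_basic n hn hp1
  have hn0 : (0 : ℝ) < n := by exact_mod_cast Nat.pos_of_ne_zero (by omega)
  have hn1000 : (1000 : ℝ) ≤ n := by exact_mod_cast hn
  set m : ℕ := min k (n - k) with hm
  have hmk : m ≤ k := min_le_left _ _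
  have hmnk : m ≤ n - k := min_le_right _ _
  have hm1 : 1 ≤ m := by omega
  have hm2 : 2 * m ≤ n := by omega
  have hmn : m ≤ n := by omega
  have hM2 : 2 * (m : ℝ) ≤ (n : ℝ) := by exact_mod_cast hm2
  have hM1 : 1 ≤ (m : ℝ) := by exact_mod_cast hm1
  -- product identity
  have hprod : k * (n - k) = m * (n - m) := by
    rcases min_choice k (n - k) with h | h
    · rw [← hm] at h; rw [h]
    · rw [← hm] at h; rw [h, Nat.sub_sub_self hk2.le, Nat.mul_comm]
  -- choose bound
  have hchoose : (n.choose k : ℝ) ≤ (n : ℝ) ^ m := by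
    rcases min_choice k (n - k) with h | h
    · rw [← hm] at h; rw [h]
      exact_mod_cast Nat.choose_le_pow n k
    · rw [← hm] at h; rw [h, ← Nat.choose_symm hk2.le]
      exact_mod_cast Nat.choose_le_pow n (n - k)
  -- pow bound : (1-p)^e ≤ exp(-p)^e
  have h1p : (0:ℝ) ≤ 1 - p := by linarith
  have h1pe : (1 - p : ℝ) ≤ Real.exp (-p) := by
    have := Real.add_one_le_exp (-p); linarith
  have hpow : (1 - p) ^ (k * (n - k)) ≤ Real.exp (-(p * ((m : ℝ) * ((n : ℝ) - (m : ℝ))))) := by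
    rw [hprod]
    calc (1 - p) ^ (m * (n - m)) ≤ Real.exp (-p) ^ (m * (n - m)) :=
          pow_le_pow_left₀ h1p h1pe _
      _ = Real.exp (-(p * ((m : ℝ) * ((n : ℝ) - (m : ℝ))))) := by
          rw [← Real.exp_nat_mul]
          congr 1
          push_cast [Nat.cast_sub hmn]
          ring
  -- base-N bound
  have hNle : (n : ℝ) ≤ Real.exp (p * ((n : ℝ) - (m : ℝ) - 1)) := by
    calc (n : ℝ) = Real.exp (Real.log n) := (Real.exp_log hn0).symm
      _ ≤ _ := Real.exp_le_exp.mpr (by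
        nlinarith [mul_nonneg hp0 (by linarith : (0:ℝ) ≤ (n:ℝ) - 2 * (m:ℝ))])
  have hkey2 : ((n : ℝ)) ^ (m - 1) ≤ Real.exp (p * (((m:ℝ) - 1) * ((n : ℝ) - (m:ℝ) - 1))) := by
    calc ((n:ℝ)) ^ (m - 1) ≤ (Real.exp (p * ((n : ℝ) - (m : ℝ) - 1))) ^ (m - 1) :=
          pow_le_pow_left₀ hn0.le hNle _
      _ = Real.exp (p * (((m:ℝ) - 1) * ((n : ℝ) - (m:ℝ) - 1))) := by
          rw [← Real.exp_nat_mul]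
          congr 1
          push_cast [Nat.cast_sub hm1]
          ring
  -- combine
  calc (n.choose k : ℝ) * (1 - p) ^ (k * (n - k))
      ≤ (n : ℝ) ^ m * Real.exp (-(p * ((m : ℝ) * ((n : ℝ) - (m : ℝ))))) := by
        apply mul_le_mul hchoose hpow (by positivity) (by positivity)
    _ = (n : ℝ) * ((n : ℝ) ^ (m - 1) * Real.exp (-(p * ((m : ℝ) * ((n : ℝ) - (m : ℝ)))))) := by
        have hpowm : (n:ℝ) ^ m = (n:ℝ) * (n:ℝ) ^ (m - 1) := by
          conv_lhs => rw [show m = 1 + (m - 1) by omega]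
          rw [pow_add, pow_one]
        rw [hpowm]; ring
    _ ≤ (n : ℝ) * (Real.exp (p * (((m:ℝ) - 1) * ((n : ℝ) - (m:ℝ) - 1))) *
          Real.exp (-(p * ((m : ℝ) * ((n : ℝ) - (m : ℝ)))))) := by
        apply mul_le_mul_of_nonneg_left _ hn0.le
        exact mul_le_mul_of_nonneg_right hkey2 (Real.exp_nonneg _)
    _ = (n : ℝ) * Real.exp (-(p * ((n : ℝ) - 1))) := by
        rw [← Real.exp_add]
        congr 1
        ring

lemma er_exp (n : ℕ) (hn : 1000 ≤ n) {p : ℝ}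
    (hp1 : 10 * Real.log n / n ≤ p) :
    (n : ℝ) * ((n : ℝ) * Real.exp (-(p * ((n : ℝ) - 1)))) ≤
      Real.exp (-((n : ℝ) * p) / 3) := by
  obtain ⟨hlog, hp0, hpn, hp1000⟩ := er_basic n hn hp1
  have hn0 : (0 : ℝ) < n := by exact_mod_cast Nat.pos_of_ne_zero (by omega)
  have hexp : (n : ℝ) = Real.exp (Real.log n) := (Real.exp_log hn0).symm
  calc (n : ℝ) * ((n : ℝ) * Real.exp (-(p * ((n : ℝ) - 1))))
      = Real.exp (Real.log n + (Real.log n + -(p * ((n:ℝ) - 1)))) := by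
        rw [Real.exp_add, Real.exp_add, ← hexp]
    _ ≤ Real.exp (-((n : ℝ) * p) / 3) := by
        apply Real.exp_le_exp.mpr
        nlinarith [hlog, hpn, hp1000]




section main
variable (n : ℕ) (p : ℝ)

/-- crossing pairs of a vertex subset -/
def erCross (S : Finset (Fin n)) : Finset (Sym2 (Fin n)) :=
  (S ×ˢ Sᶜ).image fun uv => s(uv.1, uv.2)

lemma erCross_card (S : Finset (Fin n)) : (erCross n S).card = S.card * (n - S.card) := by
  rw [erCross, Finset.card_image_of_injOn, Finset.card_product, Finset.card_compl,
    Fintype.card_fin]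
  rintro ⟨u, v⟩ huv ⟨u', v'⟩ huv' h
  simp only [Finset.mem_coe, Finset.mem_product, Finset.mem_compl] at huv huv'
  rcases Sym2.eq_iff.mp h with ⟨h1, h2⟩ | ⟨h1, h2⟩
  · simp only [Prod.mk.injEq]
    exact ⟨h1, h2⟩
  · simp only [] at h1 h2
    exact absurd (h1 ▸ huv.1) huv'.2

open Classical in
/-- the event that all crossing pairs of `S` are absent -/
def erEvent (S : Finset (Fin n)) : Set (Sym2 (Fin n) → Bool) :=
  Set.pi Set.univ fun e => if e ∈ erCross n S then {false} else Set.univ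

open Classical in
lemma erEvent_measure (hp2 : p ≤ 1) (hp0 : 0 ≤ p) (S : Finset (Fin n)) :
    erdosRenyiMeasure n p hp2 (erEvent n S) =
      ENNReal.ofReal (1 - p) ^ (S.card * (n - S.card)) := by
  classical
  rw [erdosRenyiMeasure, erEvent, Measure.pi_pi]
  have hsing : ∀ e : Sym2 (Fin n),
      (PMF.bernoulli (Real.toNNReal p) (by simpa using hp2)).toMeasure
        (if e ∈ erCross n S then ({false} : Set Bool) else Set.univ) =
      (if e ∈ erCross n S then ENNReal.ofReal (1 - p) else 1) := by
    intro e
    split_ifs with h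
    · rw [PMF.toMeasure_apply_singleton _ _ (measurableSet_singleton _),
        PMF.bernoulli_apply]
      simp only [Bool.cond_false]
      rw [ENNReal.ofReal_sub 1 hp0, ENNReal.ofReal_one]
      rw [ENNReal.coe_sub, ENNReal.coe_one]; rfl
    · simp only [MeasureTheory.measure_univ]
  calc (∏ e : Sym2 (Fin n), (PMF.bernoulli (Real.toNNReal p)
          (by simpa using hp2)).toMeasure
          (if e ∈ erCross n S then ({false} : Set Bool) else Set.univ))
      = ∏ e : Sym2 (Fin n), (if e ∈ erCross n S then ENNReal.ofReal (1 - p) else 1) :=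
        Finset.prod_congr rfl fun e _ => hsing e
    _ = ∏ _e ∈ erCross n S, ENNReal.ofReal (1 - p) := by
        rw [Finset.prod_ite_mem, Finset.univ_inter]
    _ = ENNReal.ofReal (1 - p) ^ (S.card * (n - S.card)) := by
        rw [Finset.prod_const, erCross_card]

open Classical in
lemma er_subset (hn : 1 ≤ n) :
    {ω : Sym2 (Fin n) → Bool | ¬ (erdosRenyiGraph n ω).Connected} ⊆
      ⋃ S ∈ Finset.univ.filter
          (fun S : Finset (Fin n) => ⟨0, hn⟩ ∈ S ∧ S ≠ Finset.univ),
        erEvent n S := by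
  classical
  intro ω hω
  set G := erdosRenyiGraph n ω with hG
  set v0 : Fin n := ⟨0, hn⟩
  set S : Finset (Fin n) := Finset.univ.filter (fun v => G.Reachable v0 v) with hS
  have hv0 : v0 ∈ S := by
    rw [hS, Finset.mem_filter]
    exact ⟨Finset.mem_univ _, SimpleGraph.Reachable.refl v0⟩
  have hSne : S ≠ Finset.univ := by
    intro h
    apply hω
    have : Nonempty (Fin n) := ⟨v0⟩
    constructor
    intro u v
    have hu : G.Reachable v0 u := by
      have := Finset.mem_univ u; rw [← h, hS, Finset.mem_filter] at this; exact this.2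
    have hv : G.Reachable v0 v := by
      have := Finset.mem_univ v; rw [← h, hS, Finset.mem_filter] at this; exact this.2
    exact hu.symm.trans hv
  refine Set.mem_iUnion₂.mpr ⟨S, ?_, ?_⟩
  · simp [Finset.mem_filter, hv0, hSne]
  · -- ω ∈ erEvent n S
    intro e _
    simp only
    by_cases he : e ∈ erCross n S
    · simp only [he, if_pos]
      -- show ω e = false
      rw [erCross, Finset.mem_image] at he
      obtain ⟨⟨u, v⟩, huv, rfl⟩ := he
      rw [Finset.mem_product, Finset.mem_compl] at huv
      obtain ⟨hu, hv⟩ := huv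
      have hru : G.Reachable v0 u := by
        rw [hS, Finset.mem_filter] at hu; exact hu.2
      have hneq : u ≠ v := fun h => hv (h ▸ hu)
      show ω s(u, v) ∈ ({false} : Set Bool)
      simp only [Set.mem_singleton_iff]
      by_contra hωe
      have hadj : G.Adj u v := ⟨hneq, by simpa using Bool.not_eq_false _ |>.mp hωe⟩
      have : v ∈ S := by
        rw [hS, Finset.mem_filter]
        exact ⟨Finset.mem_univ v, hru.trans hadj.reachable⟩
      exact hv this
    · simp [he]

end main

section test
variable (n : ℕ) (p : ℝ)

lemma er_sum_real (hn : 1000 ≤ n) (hp1 : 10 * Real.log n / n ≤ p) (hp2 : p ≤ 1)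
    (𝒮 : Finset (Finset (Fin n)))
    (h𝒮 : ∀ S ∈ 𝒮, S.Nonempty ∧ S ≠ Finset.univ) :
    ∑ S ∈ 𝒮, (1 - p) ^ (S.card * (n - S.card)) ≤ Real.exp (-((n : ℝ) * p) / 3) := by
  classical
  have hp0 : 0 ≤ p := by
    have hn0 : (0 : ℝ) < n := by exact_mod_cast Nat.pos_of_ne_zero (by omega)
    have hlog : 0 ≤ Real.log n := Real.log_nonneg (by exact_mod_cast (by omega : 1 ≤ n))
    exact le_trans (by positivity) hp1
  have h1p : (0:ℝ) ≤ 1 - p := by linarith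
  have hmaps : ∀ S ∈ 𝒮, S.card ∈ Finset.Icc 1 (n - 1) := by
    intro S hS
    obtain ⟨hne, hnu⟩ := h𝒮 S hS
    rw [Finset.mem_Icc]
    constructor
    · exact Finset.card_pos.mpr hne
    · have : S.card < n := by
        have := Finset.card_lt_card (Finset.ssubset_univ_iff.mpr hnu)
        simpa using this
      omega
  rw [← Finset.sum_fiberwise_of_maps_to hmaps]
  have hinner : ∀ k ∈ Finset.Icc 1 (n - 1),
      (∑ S ∈ 𝒮.filter (fun S => S.card = k), (1 - p) ^ (S.card * (n - S.card))) ≤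
        (n : ℝ) * Real.exp (-(p * ((n : ℝ) - 1))) := by
    intro k hk
    rw [Finset.mem_Icc] at hk
    have hkn : k < n := by omega
    calc (∑ S ∈ 𝒮.filter (fun S => S.card = k), (1 - p) ^ (S.card * (n - S.card)))
        = ∑ _S ∈ 𝒮.filter (fun S => S.card = k), (1 - p) ^ (k * (n - k)) := by
          apply Finset.sum_congr rfl
          intro S hS
          rw [Finset.mem_filter] at hS
          rw [hS.2]
      _ = ((𝒮.filter (fun S => S.card = k)).card : ℝ) * (1 - p) ^ (k * (n - k)) := by
          rw [Finset.sum_const, nsmul_eq_mul]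
      _ ≤ (n.choose k : ℝ) * (1 - p) ^ (k * (n - k)) := by
          apply mul_le_mul_of_nonneg_right _ (by positivity)
          have hsub : 𝒮.filter (fun S => S.card = k) ⊆ Finset.univ.powersetCard k := by
            intro S hS
            rw [Finset.mem_filter] at hS
            rw [Finset.mem_powersetCard]
            exact ⟨Finset.subset_univ _, hS.2⟩
          have := Finset.card_le_card hsub
          rw [Finset.card_powersetCard, Finset.card_univ, Fintype.card_fin] at this
          exact_mod_cast this
      _ ≤ (n : ℝ) * Real.exp (-(p * ((n : ℝ) - 1))) := er_key n hn hp1 hp2 hk.1 hkn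
  calc (∑ k ∈ Finset.Icc 1 (n - 1), ∑ S ∈ 𝒮.filter (fun S => S.card = k),
          (1 - p) ^ (S.card * (n - S.card)))
      ≤ ∑ _k ∈ Finset.Icc 1 (n - 1), (n : ℝ) * Real.exp (-(p * ((n : ℝ) - 1))) :=
        Finset.sum_le_sum hinner
    _ = ((n - 1 : ℕ) : ℝ) * ((n : ℝ) * Real.exp (-(p * ((n : ℝ) - 1)))) := by
        rw [Finset.sum_const, nsmul_eq_mul, Nat.card_Icc]
        norm_num
    _ ≤ (n : ℝ) * ((n : ℝ) * Real.exp (-(p * ((n : ℝ) - 1)))) := by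
        exact mul_le_mul_of_nonneg_right (Nat.cast_le.mpr (Nat.sub_le n 1))
          (by positivity)
    _ ≤ Real.exp (-((n : ℝ) * p) / 3) := er_exp n hn hp1

end test


/-- For `n ≥ 1000` and `(10 ln n)/n ≤ p ≤ 1`, the random graph `G(n,p)` is
connected with probability at least `1 − e^{−np/3}`. -/
theorem erdosRenyi_connected_prob (n : ℕ) (hn : 1000 ≤ n) (p : ℝ)
    (hp1 : 10 * Real.log n / n ≤ p) (hp2 : p ≤ 1) :
    ENNReal.ofReal (1 - Real.exp (-((n : ℝ) * p) / 3)) ≤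
      erdosRenyiMeasure n p hp2 {ω | (erdosRenyiGraph n ω).Connected} := by
  classical
  have hn1 : 1 ≤ n := by omega
  have hp0 : 0 ≤ p := by
    have hn0 : (0 : ℝ) < n := by exact_mod_cast Nat.pos_of_ne_zero (by omega)
    have hlog : 0 ≤ Real.log n := Real.log_nonneg (by exact_mod_cast hn1)
    exact le_trans (by positivity) hp1
  set μ := erdosRenyiMeasure n p hp2 with hμ
  haveI : IsProbabilityMeasure μ := by
    rw [hμ, erdosRenyiMeasure]; infer_instance
  set 𝒮 : Finset (Finset (Fin n)) := Finset.univ.filter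
      (fun S : Finset (Fin n) => (⟨0, hn1⟩ : Fin n) ∈ S ∧ S ≠ Finset.univ) with h𝒮
  set A := {ω : Sym2 (Fin n) → Bool | (erdosRenyiGraph n ω).Connected} with hA
  have hcompl : μ Aᶜ ≤ ENNReal.ofReal (Real.exp (-((n : ℝ) * p) / 3)) := by
    have h1 : Aᶜ = {ω | ¬ (erdosRenyiGraph n ω).Connected} := by
      rw [hA]; ext ω; simp
    calc μ Aᶜ ≤ μ (⋃ S ∈ 𝒮, erEvent n S) :=
          measure_mono (by rw [h1]; exact er_subset n hn1)
      _ ≤ ∑ S ∈ 𝒮, μ (erEvent n S) := measure_biUnion_finset_le 𝒮 _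
      _ = ∑ S ∈ 𝒮, ENNReal.ofReal (1 - p) ^ (S.card * (n - S.card)) :=
          Finset.sum_congr rfl fun S _ => erEvent_measure n p hp2 hp0 S
      _ = ∑ S ∈ 𝒮, ENNReal.ofReal ((1 - p) ^ (S.card * (n - S.card))) :=
          Finset.sum_congr rfl fun S _ => (ENNReal.ofReal_pow (by linarith) _).symm
      _ = ENNReal.ofReal (∑ S ∈ 𝒮, (1 - p) ^ (S.card * (n - S.card))) :=
          (ENNReal.ofReal_sum_of_nonneg fun S _ => pow_nonneg (by linarith) _).symm
      _ ≤ ENNReal.ofReal (Real.exp (-((n : ℝ) * p) / 3)) := by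
          apply ENNReal.ofReal_le_ofReal
          apply er_sum_real n p hn hp1 hp2
          intro S hS
          rw [h𝒮, Finset.mem_filter] at hS
          exact ⟨⟨_, hS.2.1⟩, hS.2.2⟩
  have h1A : (1 : ℝ≥0∞) ≤ μ A + μ Aᶜ := by
    rw [← measure_univ (μ := μ), ← Set.union_compl_self A]
    exact measure_union_le _ _
  calc ENNReal.ofReal (1 - Real.exp (-((n : ℝ) * p) / 3))
      = 1 - ENNReal.ofReal (Real.exp (-((n : ℝ) * p) / 3)) := by
        rw [ENNReal.ofReal_sub _ (Real.exp_nonneg _), ENNReal.ofReal_one]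
    _ ≤ 1 - μ Aᶜ := tsub_le_tsub_left hcompl 1
    _ ≤ μ A := tsub_le_iff_right.mpr h1A
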